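/- For every s > 0 and every k ∈ ℝ³, ∫_{ℝ³} (6/s² - 4|x|²/s⁴) · exp(-|x|²/s²) · exp(-i ⟨k, x⟩) dx = π^{3/2} s³ |k|² exp(-s² |k|²/4), where ⟨·,·⟩ is the Euclidean inner product and the integral is of a complex-valued function over ℝ³. -/

import Mathlib

open MeasureTheory Metric Complex Real

noncomputable section

local notation "𝕍" => EuclideanSpace ℝ (Fin 3)

/-- The Gaussian-with-character integrand. -/
def sogE (k : 𝕍) (t : ℝ) (v : 𝕍) : ℂ :=
  Complex.exp (-(t : ℂ) * (‖v‖ : ℂ) ^ 2 + (-Complex.I) * ((inner ℝ k v : ℝ) : ℂ))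

lemma sogE_cont (k : 𝕍) (t : ℝ) : Continuous (sogE k t) := by
  unfold sogE
  refine Complex.continuous_exp.comp (Continuous.add ?_ ?_)
  · exact continuous_const.mul ((Complex.continuous_ofReal.comp continuous_norm).pow 2)
  · exact continuous_const.mul
      (Complex.continuous_ofReal.comp (continuous_const.inner continuous_id))

lemma sogE_integrable (k : 𝕍) {t : ℝ} (ht : 0 < t) : Integrable (sogE k t) := by
  have h := GaussianFourier.integrable_cexp_neg_mul_sq_norm_add
    (V := 𝕍) (b := (t : ℂ)) (by simpa using ht) (-Complex.I) k
  unfold sogE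
  exact h

lemma sogE_norm (k : 𝕍) (t : ℝ) (v : 𝕍) :
    ‖sogE k t v‖ = Real.exp (-t * ‖v‖ ^ 2) := by
  rw [sogE, Complex.norm_exp]
  have h : (-(t : ℂ) * (‖v‖ : ℂ) ^ 2 + (-Complex.I) * ((inner ℝ k v : ℝ) : ℂ))
      = ((-t * ‖v‖ ^ 2 : ℝ) : ℂ) + Complex.I * ((-(inner ℝ k v : ℝ) : ℝ) : ℂ) := by
    push_cast; ring
  rw [h]
  simp only [Complex.add_re, Complex.mul_re, Complex.I_re, Complex.I_im, Complex.ofReal_re,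
    Complex.ofReal_im]
  ring_nf

lemma sogE_value (k : 𝕍) {t : ℝ} (ht : 0 < t) :
    ∫ v : 𝕍, sogE k t v =
      (((Real.pi / t) ^ ((3 : ℝ) / 2) * Real.exp (-(‖k‖ ^ 2 / (4 * t))) : ℝ) : ℂ) := by
  have h := GaussianFourier.integral_cexp_neg_mul_sq_norm_add
    (V := 𝕍) (b := (t : ℂ)) (by simpa using ht) (-Complex.I) k
  simp only [sogE]
  rw [h]
  have hfr : ((Module.finrank ℝ 𝕍 : ℂ)) / 2 = (((3 : ℝ) / 2 : ℝ) : ℂ) := by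
    simp [finrank_euclideanSpace_fin]
  rw [hfr, show ((Real.pi : ℂ) / (t : ℂ)) = ((Real.pi / t : ℝ) : ℂ) from by push_cast; ring,
    ← Complex.ofReal_cpow (by positivity)]
  rw [show (-Complex.I) ^ 2 * (‖k‖ : ℂ) ^ 2 / (4 * (t : ℂ))
      = ((-(‖k‖ ^ 2 / (4 * t)) : ℝ) : ℂ) from by
    rw [neg_pow, Complex.I_sq]; push_cast; ring]
  rw [← Complex.ofReal_exp, ← Complex.ofReal_mul]

/-- derivative of the parametrized Gaussian integral -/
lemma sogE_hasDeriv (k : 𝕍) {t : ℝ} (ht : 0 < t) :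
    Integrable (fun v : 𝕍 => -((‖v‖ : ℂ) ^ 2) * sogE k t v) ∧
      HasDerivAt (fun t : ℝ => ∫ v : 𝕍, sogE k t v)
        (∫ v : 𝕍, -((‖v‖ : ℂ) ^ 2) * sogE k t v) t := by
  have hb : Integrable (fun v : 𝕍 => (4 / t) * Real.exp (-(t / 4) * ‖v‖ ^ 2)) := by
    have h4 : (0 : ℝ) < t / 4 := by linarith
    have h' := (sogE_integrable (0 : 𝕍) h4).norm
    simp only [sogE_norm] at h'
    exact h'.const_mul _
  have key : ∀ v : 𝕍, ‖v‖ ^ 2 * Real.exp (-(t / 4) * ‖v‖ ^ 2) ≤ 4 / t := by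
    intro v
    set x := ‖v‖ ^ 2 with hxdef
    have hx : 0 ≤ x := by positivity
    have hy : (t / 4) * x + 1 ≤ Real.exp ((t / 4) * x) := Real.add_one_le_exp _
    have hen : Real.exp (-(t / 4) * x) = (Real.exp ((t / 4) * x))⁻¹ := by
      rw [← Real.exp_neg]; ring_nf
    rw [hen, mul_inv_le_iff₀ (Real.exp_pos _)]
    have h4t : (0:ℝ) < 4 / t := by positivity
    have hxe : (t / 4) * x * (4 / t) = x := by field_simp
    nlinarith [mul_le_mul_of_nonneg_right
      (le_trans (by linarith : (t / 4) * x ≤ (t / 4) * x + 1) hy) h4t.le]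
  refine hasDerivAt_integral_of_dominated_loc_of_deriv_le
    (F := fun x v => sogE k x v) (F' := fun x (v : 𝕍) => -((‖v‖ : ℂ) ^ 2) * sogE k x v)
    (bound := fun v : 𝕍 => (4 / t) * Real.exp (-(t / 4) * ‖v‖ ^ 2))
    (s := ball t (t / 2)) (ball_mem_nhds t (by linarith))
    (Filter.Eventually.of_forall fun x => (sogE_cont k x).aestronglyMeasurable)
    (sogE_integrable k ht)
    ?_ ?_ hb ?_
  · exact (((Complex.continuous_ofReal.comp continuous_norm).pow 2).neg.mul
      (sogE_cont k t)).aestronglyMeasurable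
  · refine Filter.Eventually.of_forall fun v => fun x hx => ?_
    have hx2 : t / 2 < x := by
      have h := abs_lt.1 (by simpa [Real.dist_eq] using mem_ball.1 hx)
      linarith [h.1]
    rw [norm_mul, sogE_norm]
    have hnn : ‖(-((‖v‖ : ℂ) ^ 2))‖ = ‖v‖ ^ 2 := by simp
    rw [hnn]
    have hsplit : Real.exp (-x * ‖v‖ ^ 2)
        ≤ Real.exp (-(t / 4) * ‖v‖ ^ 2) * Real.exp (-(t / 4) * ‖v‖ ^ 2) := by
      rw [← Real.exp_add]
      apply Real.exp_le_exp.2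
      nlinarith [sq_nonneg ‖v‖]
    calc ‖v‖ ^ 2 * Real.exp (-x * ‖v‖ ^ 2)
        ≤ ‖v‖ ^ 2 * (Real.exp (-(t / 4) * ‖v‖ ^ 2) * Real.exp (-(t / 4) * ‖v‖ ^ 2)) := by
          gcongr
      _ = (‖v‖ ^ 2 * Real.exp (-(t / 4) * ‖v‖ ^ 2)) * Real.exp (-(t / 4) * ‖v‖ ^ 2) := by ring
      _ ≤ (4 / t) * Real.exp (-(t / 4) * ‖v‖ ^ 2) :=
          mul_le_mul_of_nonneg_right (key v) (Real.exp_pos _).le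
  · refine Filter.Eventually.of_forall fun v => fun x hx => ?_
    have h0 : HasDerivAt (fun x : ℝ => (x : ℂ)) 1 x := by
      simpa using (hasDerivAt_id x).ofReal_comp
    have h1 : HasDerivAt
        (fun x : ℝ => -(x : ℂ) * (‖v‖ : ℂ) ^ 2 + (-Complex.I) * ((inner ℝ k v : ℝ) : ℂ))
        (-((‖v‖ : ℂ) ^ 2)) x := by
      simpa using (h0.neg.mul_const ((‖v‖ : ℂ) ^ 2)).add_const
        ((-Complex.I) * ((inner ℝ k v : ℝ) : ℂ))
    have h2 := h1.cexp
    simpa [sogE, mul_comm] using h2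

end

noncomputable section

local notation "𝕍" => EuclideanSpace ℝ (Fin 3)

lemma sog_deriv_val (k : 𝕍) {t : ℝ} (ht : 0 < t) :
    (∫ v : 𝕍, -((‖v‖ : ℂ) ^ 2) * sogE k t v) =
      ((((3:ℝ)/2 * (Real.pi / t) ^ ((3:ℝ)/2 - 1) * (-(Real.pi / t ^ 2))) *
          Real.exp (-(‖k‖ ^ 2 / (4 * t))) +
        (Real.pi / t) ^ ((3:ℝ)/2) *
          (Real.exp (-(‖k‖ ^ 2 / (4 * t))) * (‖k‖ ^ 2 / (4 * t ^ 2))) : ℝ) : ℂ) := by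
  have h1 : HasDerivAt (fun u : ℝ => Real.pi / u) (-(Real.pi / t ^ 2)) t := by
    have h := (hasDerivAt_const t Real.pi).div (hasDerivAt_id t) ht.ne'
    refine h.congr_deriv ?_
    simp only [id]
    ring
  have hpow : HasDerivAt (fun u : ℝ => (Real.pi / u) ^ ((3:ℝ)/2))
      ((3:ℝ)/2 * (Real.pi / t) ^ ((3:ℝ)/2 - 1) * (-(Real.pi / t ^ 2))) t := by
    have h := h1.rpow_const (p := (3:ℝ)/2) (Or.inl (by positivity))
    convert h using 1
    ring
  have hKd : HasDerivAt (fun u : ℝ => -(‖k‖ ^ 2 / (4 * u))) (‖k‖ ^ 2 / (4 * t ^ 2)) t := by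
    have h := ((hasDerivAt_const t (‖k‖ ^ 2)).div
      ((hasDerivAt_id t).const_mul (4:ℝ)) (by positivity)).neg
    refine h.congr_deriv ?_
    simp only [id]
    ring
  have hexp := hKd.exp
  have hg := hpow.mul hexp
  -- transfer to ℂ
  have hgc := hg.ofReal_comp
  have heq : (fun u : ℝ => (((Real.pi / u) ^ ((3:ℝ)/2) *
      Real.exp (-(‖k‖ ^ 2 / (4 * u))) : ℝ) : ℂ)) =ᶠ[nhds t]
      (fun u : ℝ => ∫ v : 𝕍, sogE k u v) := by
    filter_upwards [Ioi_mem_nhds ht] with u hu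
    exact (sogE_value k hu).symm
  have hder2 : HasDerivAt (fun u : ℝ => ∫ v : 𝕍, sogE k u v)
      (((((3:ℝ)/2 * (Real.pi / t) ^ ((3:ℝ)/2 - 1) * (-(Real.pi / t ^ 2))) *
          Real.exp (-(‖k‖ ^ 2 / (4 * t))) +
        (Real.pi / t) ^ ((3:ℝ)/2) *
          (Real.exp (-(‖k‖ ^ 2 / (4 * t))) * (‖k‖ ^ 2 / (4 * t ^ 2))) : ℝ) : ℂ)) t := by
    refine HasDerivAt.congr_of_eventuallyEq ?_ heq.symm
    exact_mod_cast hgc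
  exact (sogE_hasDeriv k ht).2.unique hder2

theorem fourier_transform_sog_screen' (s : ℝ) (hs : 0 < s) (k : EuclideanSpace ℝ (Fin 3)) :
    (∫ x : EuclideanSpace ℝ (Fin 3),
        ((6 / s ^ 2 - 4 * ‖x‖ ^ 2 / s ^ 4 : ℝ) : ℂ) *
          Complex.exp (-(‖x‖ ^ 2 / s ^ 2 : ℝ)) *
          Complex.exp (-(Complex.I * ((inner ℝ k x : ℝ) : ℂ)))) =
      ((Real.pi ^ ((3 : ℝ) / 2) * s ^ 3 * ‖k‖ ^ 2 *
          Real.exp (-(s ^ 2 * ‖k‖ ^ 2 / 4)) : ℝ) : ℂ) := by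
  have ht : (0:ℝ) < (s ^ 2)⁻¹ := by positivity
  have hs' : (s : ℂ) ≠ 0 := Complex.ofReal_ne_zero.2 hs.ne'
  have hfun : (fun x : 𝕍 =>
        ((6 / s ^ 2 - 4 * ‖x‖ ^ 2 / s ^ 4 : ℝ) : ℂ) *
          Complex.exp (-(‖x‖ ^ 2 / s ^ 2 : ℝ)) *
          Complex.exp (-(Complex.I * ((inner ℝ k x : ℝ) : ℂ)))) =
      (fun x : 𝕍 => ((6 * (s ^ 2)⁻¹ : ℝ) : ℂ) * sogE k (s ^ 2)⁻¹ x +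
        ((4 * ((s ^ 2)⁻¹) ^ 2 : ℝ) : ℂ) * (-((‖x‖ : ℂ) ^ 2) * sogE k (s ^ 2)⁻¹ x)) := by
    funext x
    rw [sogE, mul_assoc, ← Complex.exp_add]
    rw [show (-((‖x‖ ^ 2 / s ^ 2 : ℝ) : ℂ) + -(Complex.I * ((inner ℝ k x : ℝ) : ℂ)))
        = -(((s ^ 2)⁻¹ : ℝ) : ℂ) * (‖x‖ : ℂ) ^ 2 + (-Complex.I) * ((inner ℝ k x : ℝ) : ℂ) from by
      push_cast; ring]
    push_cast
    field_simp
    ring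
  rw [hfun, integral_add ((sogE_integrable k ht).const_mul _)
      (((sogE_hasDeriv k ht).1).const_mul _), integral_const_mul, integral_const_mul,
    sogE_value k ht, sog_deriv_val k ht]
  rw [← Complex.ofReal_mul, ← Complex.ofReal_mul, ← Complex.ofReal_add, Complex.ofReal_inj]
  -- now a purely real computation
  have hπ := Real.pi_pos
  have e1 : Real.pi / (s ^ 2)⁻¹ = Real.pi * s ^ 2 := by field_simp
  have e2 : -(‖k‖ ^ 2 / (4 * (s ^ 2)⁻¹)) = -(s ^ 2 * ‖k‖ ^ 2 / 4) := by
    field_simp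
  rw [e1, e2]
  have e3 : ((s:ℝ) ^ 2) ^ ((3:ℝ)/2) = s ^ 3 := by
    rw [← Real.rpow_natCast s 2, ← Real.rpow_mul hs.le,
      show ((2:ℕ):ℝ) * ((3:ℝ)/2) = ((3:ℕ):ℝ) by norm_num, Real.rpow_natCast]
  have e4 : (Real.pi * s ^ 2) ^ ((3:ℝ)/2) = Real.pi ^ ((3:ℝ)/2) * s ^ 3 := by
    rw [Real.mul_rpow hπ.le (sq_nonneg s), e3]
  have e5 : (Real.pi * s ^ 2) ^ ((3:ℝ)/2 - 1)
      = Real.pi ^ ((3:ℝ)/2) * s ^ 3 / (Real.pi * s ^ 2) := by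
    rw [Real.rpow_sub (by positivity), Real.rpow_one, e4]
  rw [e4, e5]
  field_simp
  ring

end

/-- 3D Fourier transform of one term of the sum-of-Gaussians screening function:
`∫_{ℝ³} (6/s² - 4|x|²/s⁴) e^{-|x|²/s²} e^{-i⟨k,x⟩} dx = π^{3/2} s³ |k|² e^{-s²|k|²/4}`. -/
theorem fourier_transform_sog_screen (s : ℝ) (hs : 0 < s) (k : EuclideanSpace ℝ (Fin 3)) :
    (∫ x : EuclideanSpace ℝ (Fin 3),
        ((6 / s ^ 2 - 4 * ‖x‖ ^ 2 / s ^ 4 : ℝ) : ℂ) *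
          Complex.exp (-(‖x‖ ^ 2 / s ^ 2 : ℝ)) *
          Complex.exp (-(Complex.I * ((inner ℝ k x : ℝ) : ℂ)))) =
      ((Real.pi ^ ((3 : ℝ) / 2) * s ^ 3 * ‖k‖ ^ 2 *
          Real.exp (-(s ^ 2 * ‖k‖ ^ 2 / 4)) : ℝ) : ℂ) :=
  fourier_transform_sog_screen' s hs k
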